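/- arXiv:1604.07724 — 4 statements merged into one kernel-verified Lean document; each statement's English description precedes it below -/
import Mathlib

section
/- Let Π be a graph property, let H = (U, F) be a finite simple graph, let h ≥ 2, s ≥ 1 and s' ≥ 0 be integers, and let V be a finite set partitioned into pairwise disjoint sets {X_u : u ∈ U}, each of size s, together with a set Y of size s'. For each v ∈ U let G_v be a graph on vertex set V such that for every X ⊆ V with |X| ≥ h·s + s' it holds that G_v[X] ∈ Π if and only if X = Y ∪ ⋃_{u ∈ W''} X_u for some W'' ⊆ N_H(v), where N_H(v) is the neighborhood of v in H. Then there exists a set X ⊆ V with |X| ≥ h·s + s' such that G_v[X] ∈ Π for at least h vertices v ∈ U, if and only if H contains a biclique K_{h,h}, i.e., two disjoint sets C, D ⊆ U with |C| = |D| = h such that every vertex of C is adjacent in H to every vertex of D. -/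
/-- core of the general hardness reduction, Theorem 5 of the
paper. Let `P` be a graph property, `H` a finite graph on vertex set `U`,
`h ≥ 2`, `s ≥ 1`, `s' ≥ 0`, and let the finite set `V` be partitioned into
pairwise disjoint sets `Xu u` (`u ∈ U`), each of size `s`, together with a set
`Y` of size `s'`. Suppose for each `v ∈ U` the graph `G v` on `V` satisfies: for
every `X ⊆ V` with `|X| ≥ h·s + s'`, `(G v)[X] ∈ P` iff
`X = Y ∪ ⋃_{u ∈ W''} Xu u` for some `W'' ⊆ N_H(v)`. Then there is `X ⊆ V` with
`|X| ≥ h·s + s'` such that `(G v)[X] ∈ P` for at least `h` vertices `v ∈ U`, iff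
`H` contains a biclique `K_{h,h}`. -/
theorem stmt_5
    (P : ∀ {β : Type} [Finite β], SimpleGraph β → Prop)
    (U : Type) [Fintype U] [DecidableEq U] (H : SimpleGraph U)
    (h s s' : ℕ) (hh : 2 ≤ h) (hs : 1 ≤ s)
    (V : Type) [Fintype V] [DecidableEq V]
    (Xu : U → Finset V) (Y : Finset V)
    (hXcard : ∀ u, (Xu u).card = s)
    (hYcard : Y.card = s')
    (hXdisj : ∀ u u', u ≠ u' → Disjoint (Xu u) (Xu u'))
    (hYdisj : ∀ u, Disjoint Y (Xu u))
    (hcover : Y ∪ Finset.univ.biUnion Xu = Finset.univ)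
    (G : U → SimpleGraph V)
    (hG : ∀ (v : U) (X : Finset V), h * s + s' ≤ X.card →
      (P ((G v).induce (↑X : Set V)) ↔
        ∃ W'' : Finset U, (∀ u ∈ W'', H.Adj v u) ∧ X = Y ∪ W''.biUnion Xu)) :
    (∃ X : Finset V, h * s + s' ≤ X.card ∧
        ∃ S : Finset U, h ≤ S.card ∧ ∀ v ∈ S, P ((G v).induce (↑X : Set V))) ↔
      ∃ C D : Finset U, Disjoint C D ∧ C.card = h ∧ D.card = h ∧
        ∀ c ∈ C, ∀ d ∈ D, H.Adj c d := by
  constructor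
  · rintro ⟨X, hXc, S, hSc, hSP⟩
    obtain ⟨v0, hv0⟩ : S.Nonempty := Finset.card_pos.mp (by omega)
    obtain ⟨W, hWadj, hWX⟩ := (hG v0 X hXc).mp (hSP v0 hv0)
    have key : ∀ v ∈ S, ∀ u ∈ W, H.Adj v u := by
      intro v hv u hu
      obtain ⟨W', hW'adj, hW'X⟩ := (hG v X hXc).mp (hSP v hv)
      have huW' : u ∈ W' := by
        obtain ⟨x, hx⟩ : (Xu u).Nonempty :=
          Finset.card_pos.mp (by rw [hXcard u]; omega)
        have hxX : x ∈ X := by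
          rw [hWX]
          exact Finset.mem_union_right _ (Finset.mem_biUnion.mpr ⟨u, hu, hx⟩)
        rw [hW'X] at hxX
        rcases Finset.mem_union.mp hxX with hY | hB
        · exact absurd hx (Finset.disjoint_left.mp (hYdisj u) hY)
        · obtain ⟨u', hu', hxu'⟩ := Finset.mem_biUnion.mp hB
          by_cases heq : u' = u
          · exact heq ▸ hu'
          · exact absurd hx (Finset.disjoint_left.mp (hXdisj u' u heq) hxu')
      exact hW'adj u huW'
    have hXcard' : X.card = s' + W.card * s := by
      rw [hWX, Finset.card_union_of_disjoint
          ((Finset.disjoint_biUnion_right _ _ _).mpr fun u _ => hYdisj u),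
        Finset.card_biUnion fun x _ y _ hxy => hXdisj x y hxy, hYcard]
      simp [hXcard, mul_comm]
    have hWc : h ≤ W.card := by
      have : h * s ≤ W.card * s := by omega
      exact Nat.le_of_mul_le_mul_right this (by omega)
    obtain ⟨D, hDW, hDc⟩ := Finset.exists_subset_card_eq hWc
    obtain ⟨C, hCS, hCc⟩ := Finset.exists_subset_card_eq hSc
    refine ⟨C, D, ?_, hCc, hDc, fun c hc d hd => key c (hCS hc) d (hDW hd)⟩
    refine Finset.disjoint_left.mpr fun v hvC hvD => ?_
    exact H.irrefl (key v (hCS hvC) v (hDW hvD))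
  · rintro ⟨C, D, hCD, hCc, hDc, hadj⟩
    refine ⟨Y ∪ D.biUnion Xu, ?_, C, hCc.ge, fun v hv => ?_⟩
    · rw [Finset.card_union_of_disjoint
          ((Finset.disjoint_biUnion_right _ _ _).mpr fun u _ => hYdisj u),
        Finset.card_biUnion fun x _ y _ hxy => hXdisj x y hxy, hYcard]
      simp [hXcard, mul_comm, hDc]
      omega
    · have hcard : h * s + s' ≤ (Y ∪ D.biUnion Xu).card := by
        rw [Finset.card_union_of_disjoint
            ((Finset.disjoint_biUnion_right _ _ _).mpr fun u _ => hYdisj u),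
          Finset.card_biUnion fun x _ y _ hxy => hXdisj x y hxy, hYcard]
        simp [hXcard, mul_comm, hDc]
        omega
      exact (hG v _ hcard).mpr
        ⟨D, fun u hu => hadj v hv u hu, rfl⟩
end

section
/- Let G_1 = (V, E_1) and G_2 = (V, E_2) be graphs on the same finite vertex set V with n = |V|. Define the graph G' = (V', E') with V' = {v_1, v_2 : v ∈ V} and E' = {{v_1, v_2} : v ∈ V} ∪ {{u_i, v_i} : {u, v} ∈ E_i, i ∈ {1, 2}}, and define edge weights w by w({v_1, v_2}) = n for each v ∈ V and w({u_i, v_i}) = n + 1 for each {u, v} ∈ E_i. Then for every positive integer k: there exists a set X ⊆ V with |X| ≥ k such that both induced subgraphs G_1[X] and G_2[X] have perfect matchings, if and only if G' has a matching of total w-weight at least n² + k. -/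
set_option linter.unusedSectionVars false
set_option linter.unusedVariables false

/-- The auxiliary graph `G'` of Lemma 10: vertex set `V × Fin 2` (two copies of
`V`), with an edge `{v₁, v₂}` between the two copies of each `v ∈ V`, and an
edge `{uᵢ, vᵢ}` inside copy `i` for each edge `{u, v}` of `Gᵢ`. -/
def stmt9Graph (V : Type) (G1 G2 : SimpleGraph V) : SimpleGraph (V × Fin 2) :=
  SimpleGraph.fromRel (fun a b =>
    a.1 = b.1 ∨
      (a.2 = b.2 ∧ a.2 = 0 ∧ G1.Adj a.1 b.1) ∨
      (a.2 = b.2 ∧ a.2 = 1 ∧ G2.Adj a.1 b.1))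

/-- The edge weights of Lemma 10: weight `n` on the edges `{v₁, v₂}` joining the
two copies of a vertex, and weight `n + 1` on all other (layer) edges. -/
noncomputable def stmt9Weight (V : Type) [DecidableEq V] (n : ℕ) :
    Sym2 (V × Fin 2) → ℕ :=
  Sym2.lift ⟨fun a b => if a.1 = b.1 then n else n + 1, by
    intro a b
    by_cases hab : a.1 = b.1 <;> simp [hab, eq_comm]⟩

namespace Stmt9

variable {V : Type} [Fintype V] [DecidableEq V] {G1 G2 : SimpleGraph V}

lemma weight_mk (n : ℕ) (a b : V × Fin 2) :
    stmt9Weight V n s(a, b) = if a.1 = b.1 then n else n + 1 := rfl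

lemma adj_cases {M : (stmt9Graph V G1 G2).Subgraph} {a b : V × Fin 2} (h : M.Adj a b) :
    (a.1 = b.1 ∧ a.2 ≠ b.2) ∨
      (a.1 ≠ b.1 ∧ a.2 = b.2 ∧
        ((a.2 = 0 ∧ G1.Adj a.1 b.1) ∨ (a.2 = 1 ∧ G2.Adj a.1 b.1))) := by
  have h' := M.adj_sub h
  rw [stmt9Graph, SimpleGraph.fromRel_adj] at h'
  obtain ⟨hne, h'⟩ := h'
  by_cases h1 : a.1 = b.1
  · left
    refine ⟨h1, fun h2 => hne ?_⟩
    exact Prod.ext h1 h2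
  · right
    refine ⟨h1, ?_⟩
    rcases h' with (h1' | ⟨he, h0, hadj⟩ | ⟨he, h0, hadj⟩) | (h1' | ⟨he, h0, hadj⟩ | ⟨he, h0, hadj⟩)
    · exact absurd h1' h1
    · exact ⟨he, Or.inl ⟨h0, hadj⟩⟩
    · exact ⟨he, Or.inr ⟨h0, hadj⟩⟩
    · exact absurd h1'.symm h1
    · exact ⟨he.symm, Or.inl ⟨he ▸ h0, hadj.symm⟩⟩
    · exact ⟨he.symm, Or.inr ⟨he ▸ h0, hadj.symm⟩⟩

noncomputable def XF (M : (stmt9Graph V G1 G2).Subgraph) (i : Fin 2) : Finset V :=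
  (Set.toFinite {v | ∃ u, M.Adj (v, i) (u, i)}).toFinset

noncomputable def YF (M : (stmt9Graph V G1 G2).Subgraph) : Finset V :=
  (Set.toFinite {v | M.Adj (v, 0) (v, 1)}).toFinset

lemma mem_XF {M : (stmt9Graph V G1 G2).Subgraph} {i : Fin 2} {v : V} :
    v ∈ XF M i ↔ ∃ u, M.Adj (v, i) (u, i) := by simp [XF]

lemma mem_YF {M : (stmt9Graph V G1 G2).Subgraph} {v : V} :
    v ∈ YF M ↔ M.Adj (v, 0) (v, 1) := by simp [YF]

lemma fin01 {P : Prop} (h : (0 : Fin 2) = 1) : P := absurd h (by decide)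
lemma fin10 {P : Prop} (h : (1 : Fin 2) = 0) : P := absurd h (by decide)
lemma fin_ne01 : (0 : Fin 2) ≠ 1 := by decide
lemma fin_ne10 : (1 : Fin 2) ≠ 0 := by decide

open Finset in
lemma card_XF {M : (stmt9Graph V G1 G2).Subgraph} (hM : M.IsMatching) (i : Fin 2) :
    (XF M i).card =
      2 * ((Set.toFinite M.edgeSet).toFinset.filter (fun e => ∀ a ∈ e, a.2 = i)).card := by
  classical
  set E := (Set.toFinite M.edgeSet).toFinset with hE
  set T := E.filter (fun e => ∀ a ∈ e, a.2 = i) with hT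
  have hpartner : ∀ v ∈ XF M i, ∃ u, M.Adj (v, i) (u, i) := fun v hv => mem_XF.mp hv
  set f : V → Sym2 (V × Fin 2) := fun v =>
    if h : ∃ u, M.Adj (v, i) (u, i) then s((v, i), (h.choose, i)) else s((v,i),(v,i)) with hf
  have hmaps : ∀ v ∈ XF M i, f v ∈ T := by
    intro v hv
    obtain ⟨u, hu⟩ := mem_XF.mp hv
    have hex : ∃ u, M.Adj (v, i) (u, i) := ⟨u, hu⟩
    rw [hf]
    simp only [dif_pos hex]
    rw [hT, Finset.mem_filter]
    constructor
    · rw [hE, Set.Finite.mem_toFinset]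
      exact hex.choose_spec
    · intro a ha
      rcases Sym2.mem_iff.mp ha with h | h <;> subst h <;> rfl
  have key : ∀ e ∈ T, (Finset.filter (fun v => f v = e) (XF M i)).card = 2 := by
    intro e
    induction e using Sym2.ind with
    | _ a b =>
      intro he
      rw [hT, Finset.mem_filter] at he
      obtain ⟨heE, hall⟩ := he
      rw [hE, Set.Finite.mem_toFinset, SimpleGraph.Subgraph.mem_edgeSet] at heE
      have ha2 : a.2 = i := hall a (Sym2.mem_mk_left a b)
      have hb2 : b.2 = i := hall b (Sym2.mem_mk_right a b)
      have hne : a.1 ≠ b.1 := by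
        rcases adj_cases heE with ⟨h1, h2⟩ | ⟨h1, _⟩
        · exact absurd (ha2.trans hb2.symm) h2
        · exact h1
      have hfix : ∀ c d : V × Fin 2, c.2 = i → d.2 = i → M.Adj c d →
          f c.1 = s(c, d) := by
        intro c d hc hd hcd
        have hc' : (c.1, i) = c := Prod.ext rfl hc.symm
        have hd' : (d.1, i) = d := Prod.ext rfl hd.symm
        have hex : ∃ u, M.Adj (c.1, i) (u, i) := ⟨d.1, by rw [hc', hd']; exact hcd⟩
        rw [hf]
        simp only [dif_pos hex]
        have hu : M.Adj (c.1, i) (hex.choose, i) := hex.choose_spec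
        have hcd' : M.Adj (c.1, i) d := by rw [hc']; exact hcd
        obtain ⟨w, _, huniq⟩ := hM (M.edge_vert hu)
        have h12 : ((hex.choose, i) : V × Fin 2) = d := (huniq _ hu).trans (huniq _ hcd').symm
        rw [h12, hc']
      have hfilter : Finset.filter (fun v => f v = s(a, b)) (XF M i) = {a.1, b.1} := by
        ext v
        rw [Finset.mem_filter, Finset.mem_insert, Finset.mem_singleton]
        constructor
        · rintro ⟨hv, hfv⟩
          obtain ⟨u, hu⟩ := mem_XF.mp hv
          have hex : ∃ u, M.Adj (v, i) (u, i) := ⟨u, hu⟩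
          rw [hf] at hfv
          simp only [dif_pos hex] at hfv
          rw [Sym2.eq_iff] at hfv
          rcases hfv with ⟨h1, _⟩ | ⟨h1, _⟩
          · left; exact congrArg Prod.fst h1
          · right; exact congrArg Prod.fst h1
        · rintro (rfl | rfl)
          · refine ⟨mem_XF.mpr ⟨b.1, ?_⟩, ?_⟩
            · rw [show ((a.1, i) : V × Fin 2) = a from Prod.ext rfl ha2.symm,
                show ((b.1, i) : V × Fin 2) = b from Prod.ext rfl hb2.symm]
              exact heE
            · exact hfix a b ha2 hb2 heE
          · refine ⟨mem_XF.mpr ⟨a.1, ?_⟩, ?_⟩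
            · rw [show ((a.1, i) : V × Fin 2) = a from Prod.ext rfl ha2.symm,
                show ((b.1, i) : V × Fin 2) = b from Prod.ext rfl hb2.symm]
              exact heE.symm
            · rw [hfix b a hb2 ha2 heE.symm, Sym2.eq_swap]
      rw [hfilter]
      rw [Finset.card_insert_of_notMem (by simpa using hne), Finset.card_singleton]
  rw [Finset.card_eq_sum_card_fiberwise hmaps, Finset.sum_congr rfl key]
  rw [Finset.sum_const, smul_eq_mul, mul_comm]

open Finset in
lemma card_YF {M : (stmt9Graph V G1 G2).Subgraph} (hM : M.IsMatching) :
    (YF M).card = ((Set.toFinite M.edgeSet).toFinset.filter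
      (fun e => ∃ v : V, e = s(((v, 0) : V × Fin 2), (v, 1)))).card := by
  classical
  refine Finset.card_bij (fun v _ => s(((v, 0) : V × Fin 2), (v, 1))) ?_ ?_ ?_
  · intro v hv
    rw [Finset.mem_filter, Set.Finite.mem_toFinset, SimpleGraph.Subgraph.mem_edgeSet]
    exact ⟨mem_YF.mp hv, v, rfl⟩
  · intro v _ w _ h
    rw [Sym2.eq_iff] at h
    rcases h with ⟨h, _⟩ | ⟨h, _⟩ <;> exact congrArg Prod.fst h
  · intro e he
    rw [Finset.mem_filter] at he
    obtain ⟨heE, v, rfl⟩ := he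
    rw [Set.Finite.mem_toFinset, SimpleGraph.Subgraph.mem_edgeSet] at heE
    exact ⟨v, mem_YF.mpr heE, rfl⟩

open Finset in
lemma two_mul_weight (n : ℕ) {M : (stmt9Graph V G1 G2).Subgraph} (hM : M.IsMatching) :
    2 * ∑ e ∈ (Set.toFinite M.edgeSet).toFinset, stmt9Weight V n e =
      2 * n * (YF M).card + (n + 1) * ((XF M 0).card + (XF M 1).card) := by
  classical
  set E := (Set.toFinite M.edgeSet).toFinset with hE
  set Pv : Sym2 (V × Fin 2) → Prop :=
    fun e => ∃ v : V, e = s(((v, 0) : V × Fin 2), (v, 1)) with hPv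
  have hshape : ∀ e ∈ E, (Pv e ∧ stmt9Weight V n e = n) ∨
      (¬ Pv e ∧ stmt9Weight V n e = n + 1 ∧
        ((∀ a ∈ e, a.2 = (0 : Fin 2)) ∨ (∀ a ∈ e, a.2 = (1 : Fin 2)))) := by
    intro e
    induction e using Sym2.ind with
    | _ a b =>
      intro heE
      rw [hE, Set.Finite.mem_toFinset, SimpleGraph.Subgraph.mem_edgeSet] at heE
      rcases adj_cases heE with ⟨h1, h2⟩ | ⟨h1, h2, _⟩
      · left
        constructor
        · rcases (by omega : a.2 = 0 ∧ b.2 = 1 ∨ a.2 = 1 ∧ b.2 = 0) with ⟨ha, hb⟩ | ⟨ha, hb⟩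
          · refine ⟨a.1, ?_⟩
            rw [Sym2.eq_iff]
            exact Or.inl ⟨Prod.ext rfl ha, Prod.ext h1.symm hb⟩
          · refine ⟨a.1, ?_⟩
            rw [Sym2.eq_iff]
            exact Or.inr ⟨Prod.ext rfl ha, Prod.ext h1.symm hb⟩
        · rw [weight_mk, if_pos h1]
      · right
        refine ⟨?_, by rw [weight_mk, if_neg h1], ?_⟩
        · rintro ⟨v, hv⟩
          rw [Sym2.eq_iff] at hv
          rcases hv with ⟨ha, hb⟩ | ⟨ha, hb⟩ <;>
            exact h1 ((congrArg Prod.fst ha).trans (congrArg Prod.fst hb).symm)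
        · have hmem : ∀ c ∈ s(a, b), c.2 = a.2 := by
            intro c hc
            rcases Sym2.mem_iff.mp hc with rfl | rfl
            · rfl
            · exact h2.symm
          rcases (by omega : a.2 = 0 ∨ a.2 = 1) with ha | ha
          · exact Or.inl (fun c hc => (hmem c hc).trans ha)
          · exact Or.inr (fun c hc => (hmem c hc).trans ha)
  rw [← Finset.sum_filter_add_sum_filter_not E Pv (stmt9Weight V n)]
  have h1 : ∑ e ∈ E.filter Pv, stmt9Weight V n e = n * (YF M).card := by
    rw [Finset.sum_congr rfl (fun e he => ?_), Finset.sum_const, smul_eq_mul, mul_comm,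
      card_YF hM]
    rcases hshape e (Finset.mem_of_mem_filter e he) with ⟨_, hw⟩ | ⟨hnp, _⟩
    · exact hw
    · exact absurd (Finset.mem_filter.mp he).2 hnp
  have hsub : E.filter (fun e => ¬ Pv e) =
      E.filter (fun e => ∀ a ∈ e, a.2 = (0 : Fin 2)) ∪
        E.filter (fun e => ∀ a ∈ e, a.2 = (1 : Fin 2)) := by
    ext e
    simp only [Finset.mem_union, Finset.mem_filter]
    constructor
    · rintro ⟨heE, hnp⟩
      rcases hshape e heE with ⟨hp, _⟩ | ⟨_, _, hor⟩
      · exact absurd hp hnp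
      · rcases hor with h | h
        · exact Or.inl ⟨heE, h⟩
        · exact Or.inr ⟨heE, h⟩
    · rintro (⟨heE, h⟩ | ⟨heE, h⟩) <;> refine ⟨heE, ?_⟩ <;> rintro ⟨v, rfl⟩
      · have h2 : (1 : Fin 2) = 0 := h (v, 1) (Sym2.mem_mk_right _ _)
        exact absurd h2 (by decide)
      · have h2 : (0 : Fin 2) = 1 := h (v, 0) (Sym2.mem_mk_left _ _)
        exact absurd h2 (by decide)
  have h2 : ∑ e ∈ E.filter (fun e => ¬ Pv e), stmt9Weight V n e =
      (n + 1) * ((E.filter (fun e => ∀ a ∈ e, a.2 = (0 : Fin 2))).card +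
        (E.filter (fun e => ∀ a ∈ e, a.2 = (1 : Fin 2))).card) := by
    rw [Finset.sum_congr rfl (fun e he => ?_), Finset.sum_const, smul_eq_mul, mul_comm, hsub,
      Finset.card_union_of_disjoint ?_]
    · rw [Finset.disjoint_left]
      intro e
      induction e using Sym2.ind with
      | _ a b =>
        intro he0 he1
        have h0 := (Finset.mem_filter.mp he0).2 a (Sym2.mem_mk_left a b)
        have h1 := (Finset.mem_filter.mp he1).2 a (Sym2.mem_mk_left a b)
        omega
    · rcases hshape e (Finset.mem_of_mem_filter e he) with ⟨hp, _⟩ | ⟨_, hw, _⟩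
      · exact absurd hp (Finset.mem_filter.mp he).2
      · exact hw
  rw [h1, h2, card_XF hM 0, card_XF hM 1]
  ring

lemma disj_YF_XF {M : (stmt9Graph V G1 G2).Subgraph} (hM : M.IsMatching) :
    Disjoint (YF M) (XF M 0 ∪ XF M 1) := by
  rw [Finset.disjoint_left]
  intro v hv hvx
  have hY := mem_YF.mp hv
  rcases Finset.mem_union.mp hvx with hx | hx
  · obtain ⟨u, hu⟩ := mem_XF.mp hx
    obtain ⟨w, _, huniq⟩ := hM (M.edge_vert hY)
    have h1 := (huniq _ hY).trans (huniq _ hu).symm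
    have h2 : (1 : Fin 2) = 0 := congrArg Prod.snd h1
    exact absurd h2 (by decide)
  · obtain ⟨u, hu⟩ := mem_XF.mp hx
    obtain ⟨w, _, huniq⟩ := hM (M.edge_vert hY.symm)
    have h1 := (huniq _ hY.symm).trans (huniq _ hu).symm
    have h2 : (0 : Fin 2) = 1 := congrArg Prod.snd h1
    exact absurd h2 (by decide)

lemma exists_pm (G : SimpleGraph V) {M : (stmt9Graph V G1 G2).Subgraph} (hM : M.IsMatching)
    (i : Fin 2) (hadj : ∀ a b : V, M.Adj (a, i) (b, i) → G.Adj a b) :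
    ∃ P : (G.induce (↑(XF M i) : Set V)).Subgraph, P.IsPerfectMatching := by
  refine ⟨⟨Set.univ, fun a b => M.Adj (a.1, i) (b.1, i), fun {a b} h => hadj a.1 b.1 h,
    fun {a b} _ => Set.mem_univ a, ⟨fun a b h => h.symm⟩⟩, ?_, fun v => Set.mem_univ v⟩
  rintro ⟨v, hv⟩ -
  obtain ⟨u, hu⟩ := mem_XF.mp (Finset.mem_coe.mp hv)
  refine ⟨⟨u, Finset.mem_coe.mpr (mem_XF.mpr ⟨v, hu.symm⟩)⟩, hu, ?_⟩
  rintro ⟨w, hw⟩ hadj'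
  obtain ⟨z, _, huniq⟩ := hM (M.edge_vert hu)
  have h1 := (huniq _ hadj').trans (huniq _ hu).symm
  exact Subtype.ext (congrArg Prod.fst h1)

theorem main (n : ℕ) (hn : n = Fintype.card V) (k : ℕ) (hk : 1 ≤ k) :
    (∃ X : Finset V, k ≤ X.card ∧
        (∃ M : (G1.induce (↑X : Set V)).Subgraph, M.IsPerfectMatching) ∧
        (∃ M : (G2.induce (↑X : Set V)).Subgraph, M.IsPerfectMatching)) ↔
      ∃ M : (stmt9Graph V G1 G2).Subgraph, M.IsMatching ∧
        n ^ 2 + k ≤ ∑ e ∈ (Set.toFinite M.edgeSet).toFinset, stmt9Weight V n e := by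
  constructor
  · rintro ⟨X, hkX, ⟨M1, hM1⟩, ⟨M2, hM2⟩⟩
    classical
    set A : V × Fin 2 → V × Fin 2 → Prop := fun a b =>
        (a.1 = b.1 ∧ a.2 ≠ b.2 ∧ a.1 ∉ (↑X : Set V)) ∨
        (a.2 = 0 ∧ b.2 = 0 ∧ ∃ (ha : a.1 ∈ (↑X : Set V)) (hb : b.1 ∈ (↑X : Set V)),
          M1.Adj ⟨a.1, ha⟩ ⟨b.1, hb⟩) ∨
        (a.2 = 1 ∧ b.2 = 1 ∧ ∃ (ha : a.1 ∈ (↑X : Set V)) (hb : b.1 ∈ (↑X : Set V)),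
          M2.Adj ⟨a.1, ha⟩ ⟨b.1, hb⟩) with hA
    have hsub : ∀ a b, A a b → (stmt9Graph V G1 G2).Adj a b := by
      rintro a b (⟨h1, h2, _⟩ | ⟨ha2, hb2, ha, hb, hadj⟩ | ⟨ha2, hb2, ha, hb, hadj⟩) <;>
        rw [stmt9Graph, SimpleGraph.fromRel_adj]
      · exact ⟨fun he => h2 (congrArg Prod.snd he), Or.inl (Or.inl h1)⟩
      · have hG : G1.Adj a.1 b.1 := M1.adj_sub hadj
        exact ⟨fun he => hG.ne (congrArg Prod.fst he),
          Or.inl (Or.inr (Or.inl ⟨ha2.trans hb2.symm, ha2, hG⟩))⟩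
      · have hG : G2.Adj a.1 b.1 := M2.adj_sub hadj
        exact ⟨fun he => hG.ne (congrArg Prod.fst he),
          Or.inl (Or.inr (Or.inr ⟨ha2.trans hb2.symm, ha2, hG⟩))⟩
    have hsymm : ∀ a b, A a b → A b a := by
      rintro a b (⟨h1, h2, h3⟩ | ⟨ha2, hb2, ha, hb, hadj⟩ | ⟨ha2, hb2, ha, hb, hadj⟩)
      · exact Or.inl ⟨h1.symm, h2.symm, h1 ▸ h3⟩
      · exact Or.inr (Or.inl ⟨hb2, ha2, hb, ha, hadj.symm⟩)
      · exact Or.inr (Or.inr ⟨hb2, ha2, hb, ha, hadj.symm⟩)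
    set M' : (stmt9Graph V G1 G2).Subgraph :=
      ⟨Set.univ, A, fun {a b} h => hsub a b h, fun {a b} _ => Set.mem_univ a,
        ⟨fun a b h => hsymm a b h⟩⟩ with hM'def
    have hmatch : M'.IsMatching := by
      rintro ⟨v, j⟩ -
      by_cases hvS : v ∈ (↑X : Set V)
      · rcases (by omega : j = 0 ∨ j = 1) with rfl | rfl
        · obtain ⟨w, hw, huniq⟩ := hM1.1 (hM1.2 ⟨v, hvS⟩)
          refine ⟨(w.1, 0), Or.inr (Or.inl ⟨rfl, rfl, hvS, w.2, hw⟩), ?_⟩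
          rintro b (⟨_, _, hnS⟩ | ⟨_, hb2, ha, hbS, hadj⟩ | ⟨ha2, _, _⟩)
          · exact absurd hvS hnS
          · have := huniq ⟨b.1, hbS⟩ hadj
            exact Prod.ext (congrArg Subtype.val this) hb2
          · exact fin01 ha2
        · obtain ⟨w, hw, huniq⟩ := hM2.1 (hM2.2 ⟨v, hvS⟩)
          refine ⟨(w.1, 1), Or.inr (Or.inr ⟨rfl, rfl, hvS, w.2, hw⟩), ?_⟩
          rintro b (⟨_, _, hnS⟩ | ⟨ha2, _, _⟩ | ⟨_, hb2, ha, hbS, hadj⟩)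
          · exact absurd hvS hnS
          · exact fin10 ha2
          · have := huniq ⟨b.1, hbS⟩ hadj
            exact Prod.ext (congrArg Subtype.val this) hb2
      · rcases (by omega : j = 0 ∨ j = 1) with rfl | rfl
        · refine ⟨(v, 1), Or.inl ⟨rfl, fin_ne01, hvS⟩, ?_⟩
          rintro b (⟨hb1, hb2, _⟩ | ⟨_, _, ha, _⟩ | ⟨ha2, _, _⟩)
          · have hb2' : (0 : Fin 2) ≠ b.2 := hb2
            exact Prod.ext hb1.symm (show b.2 = (1 : Fin 2) by omega)
          · exact absurd ha hvS
          · exact fin01 ha2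
        · refine ⟨(v, 0), Or.inl ⟨rfl, fin_ne10, hvS⟩, ?_⟩
          rintro b (⟨hb1, hb2, _⟩ | ⟨ha2, _, _⟩ | ⟨_, _, ha, _⟩)
          · have hb2' : (1 : Fin 2) ≠ b.2 := hb2
            exact Prod.ext hb1.symm (show b.2 = (0 : Fin 2) by omega)
          · exact fin10 ha2
          · exact absurd ha hvS
    refine ⟨M', hmatch, ?_⟩
    have hX0 : XF M' 0 = X := by
      ext v
      rw [mem_XF]
      constructor
      · rintro ⟨u, (⟨_, h2, _⟩ | ⟨_, _, ha, _⟩ | ⟨ha2, _, _⟩)⟩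
        · exact absurd rfl h2
        · exact Finset.mem_coe.mp ha
        · exact fin01 ha2
      · intro hv
        obtain ⟨w, hw, _⟩ := hM1.1 (hM1.2 ⟨v, Finset.mem_coe.mpr hv⟩)
        exact ⟨w.1, Or.inr (Or.inl ⟨rfl, rfl, Finset.mem_coe.mpr hv, w.2, hw⟩)⟩
    have hX1 : XF M' 1 = X := by
      ext v
      rw [mem_XF]
      constructor
      · rintro ⟨u, (⟨_, h2, _⟩ | ⟨ha2, _, _⟩ | ⟨_, _, ha, _⟩)⟩
        · exact absurd rfl h2
        · exact fin10 ha2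
        · exact Finset.mem_coe.mp ha
      · intro hv
        obtain ⟨w, hw, _⟩ := hM2.1 (hM2.2 ⟨v, Finset.mem_coe.mpr hv⟩)
        exact ⟨w.1, Or.inr (Or.inr ⟨rfl, rfl, Finset.mem_coe.mpr hv, w.2, hw⟩)⟩
    have hY : YF M' = Xᶜ := by
      ext v
      rw [mem_YF, Finset.mem_compl]
      constructor
      · rintro (⟨_, _, h3⟩ | ⟨_, hb2, _⟩ | ⟨ha2, _, _⟩)
        · exact fun hc => h3 (Finset.mem_coe.mpr hc)
        · exact fin10 hb2
        · exact fin01 ha2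
      · intro hv
        exact Or.inl ⟨rfl, fin_ne01, fun hc => hv (Finset.mem_coe.mp hc)⟩
    have h2w := two_mul_weight n hmatch
    rw [hX0, hX1, hY] at h2w
    have hcompl : (Xᶜ : Finset V).card + X.card = n := by
      rw [Finset.card_compl, hn]
      have := Finset.card_le_univ X
      omega
    have hkey : 2 * ∑ e ∈ (Set.toFinite M'.edgeSet).toFinset, stmt9Weight V n e =
        2 * n ^ 2 + 2 * X.card := by
      rw [h2w]
      have : 2 * n * (Xᶜ : Finset V).card + (n + 1) * (X.card + X.card) =
          2 * n * ((Xᶜ : Finset V).card + X.card) + 2 * X.card := by ring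
      rw [this, hcompl]
      ring
    omega
  · rintro ⟨M, hM, hW⟩
    classical
    have h2w := two_mul_weight n hM
    have hdisj := disj_YF_XF hM
    have hun : (YF M).card + (XF M 0 ∪ XF M 1).card ≤ n := by
      rw [← Finset.card_union_of_disjoint hdisj, hn]
      exact Finset.card_le_univ _
    have hui := Finset.card_union_add_card_inter (XF M 0) (XF M 1)
    have he0 := card_XF hM 0
    have he1 := card_XF hM 1
    have hadj1 : ∀ a b : V, M.Adj (a, 0) (b, 0) → G1.Adj a b := by
      intro a b h
      rcases adj_cases h with ⟨_, h2⟩ | ⟨_, _, ⟨_, hg⟩ | ⟨h0, _⟩⟩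
      · exact absurd rfl h2
      · exact hg
      · have h0' : (0 : Fin 2) = 1 := h0
        exact absurd h0' (by decide)
    have hadj2 : ∀ a b : V, M.Adj (a, 1) (b, 1) → G2.Adj a b := by
      intro a b h
      rcases adj_cases h with ⟨_, h2⟩ | ⟨_, _, ⟨h0, _⟩ | ⟨_, hg⟩⟩
      · exact absurd rfl h2
      · have h0' : (1 : Fin 2) = 0 := h0
        exact absurd h0' (by decide)
      · exact hg
    by_cases heq : XF M 0 = XF M 1
    · refine ⟨XF M 0, ?_, exists_pm G1 hM 0 hadj1, ?_⟩
      · have hu' : (YF M).card + (XF M 0).card ≤ n := by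
          rwa [← heq, Finset.union_self] at hun
        have hx01 : (XF M 1).card = (XF M 0).card := by rw [heq]
        nlinarith [hW, h2w, hx01, Nat.mul_le_mul_left (2 * n) hu']
      · rw [heq]
        exact exists_pm G2 hM 1 hadj2
    · exfalso
      have hss : XF M 0 ∩ XF M 1 ⊂ XF M 0 ∪ XF M 1 := by
        refine ⟨Finset.inter_subset_union, fun h => heq ?_⟩
        have h0 : XF M 0 ⊆ XF M 1 := fun v hv =>
          (Finset.mem_inter.mp (h (Finset.mem_union_left _ hv))).2
        have h1 : XF M 1 ⊆ XF M 0 := fun v hv =>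
          (Finset.mem_inter.mp (h (Finset.mem_union_right _ hv))).1
        exact Finset.Subset.antisymm h0 h1
      have hlt := Finset.card_lt_card hss
      have hstep : (XF M 0 ∩ XF M 1).card + 2 ≤ (XF M 0 ∪ XF M 1).card := by omega
      have hun' : (XF M 0 ∪ XF M 1).card ≤ n := by omega
      nlinarith [hW, h2w, hui, Nat.mul_le_mul_left (2 * n) hun,
        Nat.mul_le_mul_left (n + 1) hstep, hk, hun']

end Stmt9


/-- Lemma 10 of the paper. For graphs `G1, G2` on a common
vertex set `V` with `n = |V|` and every positive integer `k`: there is `X ⊆ V`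
with `|X| ≥ k` such that both `G1[X]` and `G2[X]` have perfect matchings, iff
the auxiliary weighted graph `G'` has a matching of total weight at least
`n² + k`. -/
theorem stmt_9 (V : Type) [Fintype V] [DecidableEq V] (G1 G2 : SimpleGraph V)
    (n : ℕ) (hn : n = Fintype.card V) (k : ℕ) (hk : 1 ≤ k) :
    (∃ X : Finset V, k ≤ X.card ∧
        (∃ M : (G1.induce (↑X : Set V)).Subgraph, M.IsPerfectMatching) ∧
        (∃ M : (G2.induce (↑X : Set V)).Subgraph, M.IsPerfectMatching)) ↔
      ∃ M : (stmt9Graph V G1 G2).Subgraph, M.IsMatching ∧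
        n ^ 2 + k ≤ ∑ e ∈ (Set.toFinite M.edgeSet).toFinset, stmt9Weight V n e :=
  Stmt9.main n hn k hk
end

section
/- For every integer c ≥ 2 and every integer n ≥ c + 1 such that c·n is even, there exists a connected c-regular graph on n vertices. -/
/-- For every integer `c ≥ 2` and every `n ≥ c + 1` with `c·n`
even, there exists a connected `c`-regular graph on `n` vertices. -/
theorem stmt_12 (c n : ℕ) (hc : 2 ≤ c) (hn : c + 1 ≤ n) (he : Even (c * n)) :
    ∃ G : SimpleGraph (Fin n), G.Connected ∧ ∀ v, (G.neighborSet v).ncard = c := by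
  haveI : NeZero n := ⟨by omega⟩
  set m := c / 2 with hm
  have hpar : c % 2 = 1 → n % 2 = 0 := by
    intro h
    rcases Nat.even_mul.mp he with h' | h' <;> rw [Nat.even_iff] at h' <;> omega
  set S : Finset ℕ :=
    (Finset.Icc 1 m ∪ Finset.Icc (n - m) (n - 1)) ∪ (if c % 2 = 1 then {n / 2} else ∅)
    with hS
  have hmemS : ∀ k, k ∈ S ↔
      (1 ≤ k ∧ k ≤ m) ∨ (n - m ≤ k ∧ k ≤ n - 1) ∨ (c % 2 = 1 ∧ k = n / 2) := by
    intro k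
    by_cases h : c % 2 = 1 <;>
      simp [hS, h, Finset.mem_union, Finset.mem_Icc, or_assoc] <;> tauto
  have hbound : ∀ k ∈ S, 1 ≤ k ∧ k < n := by
    intro k hk
    rw [hmemS] at hk
    rcases hk with h | h | h
    · omega
    · omega
    · have := hpar h.1; omega
  have hsym : ∀ k ∈ S, n - k ∈ S := by
    intro k hk
    rw [hmemS] at hk ⊢
    rcases hk with h | h | h
    · right; left; omega
    · left; omega
    · have := hpar h.1; right; right; omega
  have hcard : S.card = c := by
    have hdisj : Disjoint (Finset.Icc 1 m) (Finset.Icc (n - m) (n - 1)) := by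
      rw [Finset.disjoint_left]
      intro a ha ha'
      simp only [Finset.mem_Icc] at ha ha'
      omega
    have hcard1 : (Finset.Icc 1 m ∪ Finset.Icc (n - m) (n - 1)).card = 2 * m := by
      rw [Finset.card_union_of_disjoint hdisj, Nat.card_Icc, Nat.card_Icc]
      omega
    by_cases h : c % 2 = 1
    · have hn2 := hpar h
      have hdisj2 : Disjoint (Finset.Icc 1 m ∪ Finset.Icc (n - m) (n - 1))
          ({n / 2} : Finset ℕ) := by
        rw [Finset.disjoint_right]
        intro a ha ha'
        simp only [Finset.mem_singleton] at ha
        simp only [Finset.mem_union, Finset.mem_Icc] at ha'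
        omega
      rw [hS, if_pos h, Finset.card_union_of_disjoint hdisj2, hcard1]
      simp only [Finset.card_singleton]
      omega
    · rw [hS, if_neg h, Finset.union_empty, hcard1]
      omega
  -- the jump set inside `Fin n`
  set I : Set (Fin n) := {x : Fin n | x.val ∈ S} with hI
  set G : SimpleGraph (Fin n) := SimpleGraph.circulantGraph I with hG
  have hval_neg : ∀ x : Fin n, x ≠ 0 → (-x).val = n - x.val := by
    intro x hx
    have h1 : x.val ≠ 0 := by
      intro h; exact hx (Fin.ext (by rw [h, Fin.val_zero]))
    rw [Fin.neg_def]
    exact Nat.mod_eq_of_lt (by have := x.isLt; omega)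
  have hadj : ∀ u v, G.Adj u v ↔ (u - v).val ∈ S := by
    intro u v
    rw [hG, SimpleGraph.circulantGraph_adj]
    constructor
    · rintro ⟨hne, h | h⟩
      · exact h
      · have h' : (v - u).val ∈ S := h
        have hvu : v - u ≠ 0 := sub_ne_zero.mpr (Ne.symm hne)
        have : u - v = -(v - u) := by abel
        rw [this, hval_neg _ hvu]
        exact hsym _ h'
    · intro h
      have hne : u ≠ v := by
        intro e
        subst e
        simp only [sub_self, Fin.val_zero] at h
        exact absurd (hbound 0 h).1 (by omega)
      exact ⟨hne, Or.inl h⟩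
  open Fin.NatCast in
  have hnbr : ∀ v : Fin n, G.neighborSet v = (fun k : ℕ => v + (k : Fin n)) '' ↑S := by
    intro v
    ext w
    simp only [SimpleGraph.mem_neighborSet, Set.mem_image, Finset.mem_coe]
    rw [hadj]
    constructor
    · intro h
      refine ⟨(w - v).val, ?_, ?_⟩
      · have hwv : w - v = -(v - w) := by abel
        have hvw : v - w ≠ 0 := by
          intro e
          rw [e, Fin.val_zero] at h
          exact absurd (hbound 0 h).1 (by omega)
        rw [hwv, hval_neg _ hvw]
        exact hsym _ h
      · rw [Fin.cast_val_eq_self]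
        abel
    · rintro ⟨k, hk, rfl⟩
      have hkn : k < n := (hbound k hk).2
      have hk1 : 1 ≤ k := (hbound k hk).1
      have hcast : ((k : Fin n)).val = k := Fin.val_cast_of_lt hkn
      have hne0 : (k : Fin n) ≠ 0 := by
        intro e
        rw [e, Fin.val_zero] at hcast
        omega
      have : v - (v + (k : Fin n)) = -(k : Fin n) := by abel
      rw [this, hval_neg _ hne0, hcast]
      exact hsym _ hk
  have h1S : 1 ∈ S := by
    rw [hmemS]; left; omega
  have hle : SimpleGraph.cycleGraph n ≤ G := by
    intro u v h
    rw [SimpleGraph.cycleGraph_adj'] at h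
    rw [hadj]
    rcases h with h | h
    · rw [h]; exact h1S
    · have hvu : v - u ≠ 0 := by
        intro e
        rw [e, Fin.val_zero] at h
        omega
      have : u - v = -(v - u) := by abel
      rw [this, hval_neg _ hvu, h]
      exact hsym _ h1S
  haveI : Nonempty (Fin n) := ⟨⟨0, by omega⟩⟩
  refine ⟨G, SimpleGraph.Connected.mk (SimpleGraph.cycleGraph_preconnected.mono hle), ?_⟩
  intro v
  rw [hnbr v, Set.ncard_image_of_injOn, Set.ncard_coe_finset, hcard]
  intro a ha b hb hab
  simp only [Finset.mem_coe] at ha hb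
  open Fin.NatCast in
  have : (a : Fin n) = (b : Fin n) := by
    exact add_left_cancel hab
  have := congrArg Fin.val this
  rwa [Fin.val_cast_of_lt (hbound a ha).2, Fin.val_cast_of_lt (hbound b hb).2] at this
end

section
/- Let h ≥ 4 be an even integer and let H be an h-partite graph whose vertex set is partitioned into color classes U_1, …, U_h (every edge of H joins two different classes). Construct a vertex set V as follows: for each color j and each u ∈ U_j, a set V_u = {v_{u,j'} : j' ∈ {1,…,h} \ {j}} of h−1 new vertices, together with color vertices w_1, …, w_h, all pairwise distinct. Let G_1 and G_2 be graphs on V such that for each color j and each u ∈ U_j the union G_1 ∪ G_2 restricted to {w_j} ∪ V_u is a cycle of length h whose edges alternate between G_1 and G_2, these cycles for distinct vertices u of H are pairwise edge-disjoint and share only the color vertex of their common color, and G_1 and G_2 have no other edges. Let G_3 be the graph on V whose edge set consists exactly of the edges {v_{u,j'}, v_{u',j}} for every edge {u, u'} of H with u ∈ U_j and u' ∈ U_{j'}, together with the edges {w_j, w_{j+h/2}} for 1 ≤ j ≤ h/2. Then H contains a clique with exactly one vertex from each color class U_1, …, U_h if and only if there exists a set X ⊆ V with |X| ≥ h² such that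 each of G_1[X], G_2[X], and G_3[X] has a perfect matching. -/
/-- Vertex set of the reduction of Theorem 12 (matching case): one vertex
`⟨(u, j')⟩` for every vertex `u` of `H` and every color `j'` other than the color
of `u`, together with one color vertex `Sum.inr j` for every color `j`. -/
def Stmt13.Vt (h : ℕ) (U : Type) (color : U → Fin h) : Type :=
  {p : U × Fin h // p.2 ≠ color p.1} ⊕ Fin h

lemma exists_pm' {V : Type*} (G : SimpleGraph V) (m : V → V)
    (hinv : Function.Involutive m) (hadj : ∀ v, G.Adj v (m v)) :
    ∃ M : G.Subgraph, M.IsPerfectMatching := by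
  refine ⟨{ verts := Set.univ,
            Adj := fun a b => b = m a ∨ a = m b,
            adj_sub := ?_, edge_vert := ?_, symm := ?_ }, ?_, fun v => Set.mem_univ v⟩
  · rintro a b (rfl | rfl)
    · exact hadj a
    · exact (hadj b).symm
  · intros; trivial
  · constructor; rintro a b (rfl | rfl)
    · right; rfl
    · left; rfl
  · rintro v -
    refine ⟨m v, Or.inl rfl, ?_⟩
    rintro y (rfl | rfl)
    · rfl
    · exact (hinv y).symm


set_option maxHeartbeats 1000000 in
/-- Theorem 12 of the paper, matching case. Let `h ≥ 4` be
even and let `H` be an `h`-partite graph with coloring `color`. Let `G1`, `G2` be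
graphs on the constructed vertex set such that for each vertex `u` of `H` their
union restricted to `{w_{color u}} ∪ V_u` is a cycle of length `h` (given by the
enumeration `cyc u`, starting at the color vertex) whose edges alternate between
`G1` and `G2`, and `G1`, `G2` have no other edges.  Let `G3` have exactly the
edges `{v_{u,j'}, v_{u',j}}` for each edge `{u, u'}` of `H` with `u ∈ U_j`,
`u' ∈ U_{j'}`, together with the edges `{w_j, w_{j + h/2}}` for `j < h/2`.
Then `H` has a multicolored clique iff there is a vertex set `X` of size at
least `h²` such that `G1[X]`, `G2[X]` and `G3[X]` all have perfect matchings. -/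
theorem stmt_13 (h : ℕ) (hh : 4 ≤ h) (hhe : Even h)
    (U : Type) [Fintype U]
    (H : SimpleGraph U) (color : U → Fin h)
    (hpartite : ∀ u u', H.Adj u u' → color u ≠ color u')
    (G1 G2 G3 : SimpleGraph (Stmt13.Vt h U color))
    (cyc : U → Fin h → Stmt13.Vt h U color)
    (hinj : ∀ u, Function.Injective (cyc u))
    (hstart : ∀ u, cyc u ⟨0, by omega⟩ = Sum.inr (color u))
    (hrange : ∀ u, Set.range (cyc u) =
      insert (Sum.inr (color u) : Stmt13.Vt h U color)
        {x | ∃ p : {p : U × Fin h // p.2 ≠ color p.1}, p.1.1 = u ∧ x = Sum.inl p})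
    (hG1 : ∀ a b, G1.Adj a b ↔ ∃ (u : U) (i : Fin h), i.val % 2 = 0 ∧
      ((a = cyc u i ∧ b = cyc u (i + ⟨1, by omega⟩)) ∨
        (b = cyc u i ∧ a = cyc u (i + ⟨1, by omega⟩))))
    (hG2 : ∀ a b, G2.Adj a b ↔ ∃ (u : U) (i : Fin h), i.val % 2 = 1 ∧
      ((a = cyc u i ∧ b = cyc u (i + ⟨1, by omega⟩)) ∨
        (b = cyc u i ∧ a = cyc u (i + ⟨1, by omega⟩))))
    (hG3 : ∀ a b, G3.Adj a b ↔
      ((∃ p q : {p : U × Fin h // p.2 ≠ color p.1},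
          a = Sum.inl p ∧ b = Sum.inl q ∧ H.Adj p.1.1 q.1.1 ∧
          p.1.2 = color q.1.1 ∧ q.1.2 = color p.1.1) ∨
        (∃ j j' : Fin h, a = Sum.inr j ∧ b = Sum.inr j' ∧
          (j'.val = j.val + h / 2 ∨ j.val = j'.val + h / 2)))) :
    (∃ f : Fin h → U, (∀ j, color (f j) = j) ∧
        ∀ j j', j ≠ j' → H.Adj (f j) (f j')) ↔
      ∃ X : Finset (Stmt13.Vt h U color),
        h ^ 2 ≤ X.card ∧
        (∃ M : (G1.induce (↑X : Set (Stmt13.Vt h U color))).Subgraph,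
          M.IsPerfectMatching) ∧
        (∃ M : (G2.induce (↑X : Set (Stmt13.Vt h U color))).Subgraph,
          M.IsPerfectMatching) ∧
        (∃ M : (G3.induce (↑X : Set (Stmt13.Vt h U color))).Subgraph,
          M.IsPerfectMatching) := by
  classical
  haveI : NeZero h := ⟨by omega⟩
  obtain ⟨k, hk⟩ := hhe
  -- Fin basics
  have hone : (1 : Fin h).val = 1 := by rw [Fin.val_one', Nat.mod_eq_of_lt (by omega)]
  have hzval : (0 : Fin h).val = 0 := rfl
  have h1fin : (⟨1, by omega⟩ : Fin h) = 1 := Fin.ext hone.symm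
  simp only [h1fin] at hG1 hG2
  have hstart0 : ∀ u, cyc u 0 = Sum.inr (color u) := hstart
  have hval_add : ∀ i : Fin h, (i + 1).val = (i.val + 1) % h := fun i => by
    rw [Fin.val_add, hone]
  have hval_add' : ∀ i : Fin h, (i + 1).val = if i.val + 1 = h then 0 else i.val + 1 := by
    intro i
    rw [hval_add]
    by_cases hc : i.val + 1 = h
    · rw [if_pos hc, hc, Nat.mod_self]
    · rw [if_neg hc, Nat.mod_eq_of_lt (by have := i.isLt; omega)]
  have hval_sub : ∀ i : Fin h, (i - 1).val = if i.val = 0 then h - 1 else i.val - 1 := by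
    intro i
    rw [Fin.sub_def]
    show (h - (1 : Fin h).val + i.val) % h = _
    rw [hone]
    by_cases h0 : i.val = 0
    · rw [if_pos h0, h0, Nat.add_zero, Nat.mod_eq_of_lt (by omega)]
    · have hlt := i.isLt
      rw [if_neg h0, show h - 1 + i.val = (i.val - 1) + h by omega, Nat.add_mod_right,
        Nat.mod_eq_of_lt (by omega)]
  have hne_zero_val : ∀ i : Fin h, i ≠ 0 → i.val ≠ 0 := by
    intro i hi hc
    exact hi (Fin.ext (by rw [hc, hzval]))
  have hone_ne : (1 : Fin h) ≠ 0 := by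
    intro hc
    have := congrArg Fin.val hc
    rw [hone, hzval] at this
    omega
  -- representation lemmas
  have hinlr : ∀ (u : U) (i : Fin h), i ≠ 0 →
      ∃ p : {p : U × Fin h // p.2 ≠ color p.1}, p.1.1 = u ∧ cyc u i = Sum.inl p := by
    intro u i hi
    have hmem : cyc u i ∈ Set.range (cyc u) := ⟨i, rfl⟩
    rw [hrange u] at hmem
    rcases Set.mem_insert_iff.1 hmem with hmem | hmem
    · exact absurd (hinj u (hmem.trans (hstart0 u).symm)) hi
    · obtain ⟨p, hp1, hp2⟩ := hmem
      exact ⟨p, hp1, hp2⟩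
  have hinl_range : ∀ (p : {p : U × Fin h // p.2 ≠ color p.1}) (u : U),
      Sum.inl p ∈ Set.range (cyc u) → p.1.1 = u := by
    intro p u hmem
    rw [hrange u] at hmem
    rcases Set.mem_insert_iff.1 hmem with hmem | hmem
    · exact nomatch hmem
    · obtain ⟨q, hq1, hq2⟩ := hmem
      obtain rfl : p = q := Sum.inl.inj hq2
      exact hq1
  have hinl_mem : ∀ (p : {p : U × Fin h // p.2 ≠ color p.1}),
      Sum.inl p ∈ Set.range (cyc p.1.1) := by
    intro p
    rw [hrange]
    exact Set.mem_insert_of_mem _ ⟨p, rfl, rfl⟩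
  have hrep : ∀ (u u' : U) (i i' : Fin h), i ≠ 0 → cyc u i = cyc u' i' →
      u = u' ∧ i = i' := by
    intro u u' i i' hi he
    obtain ⟨p, hp1, hp2⟩ := hinlr u i hi
    have h2 : p.1.1 = u' := hinl_range p u' ⟨i', by rw [← he, hp2]⟩
    subst hp1
    subst h2
    exact ⟨rfl, hinj _ he⟩
  have haddval : ∀ (a b : Fin h), a + 1 = b → b ≠ 0 → b.val = a.val + 1 := by
    intro a b hab hb0
    have hv : b.val = (a.val + 1) % h := by rw [← hab, hval_add a]
    rcases Nat.lt_or_ge (a.val + 1) h with hlt | hge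
    · rw [Nat.mod_eq_of_lt hlt] at hv
      exact hv
    · exfalso
      have hae : a.val + 1 = h := by have := a.isLt; omega
      rw [hae, Nat.mod_self] at hv
      exact (hne_zero_val b hb0) hv
  have key1 : ∀ (u : U) (i : Fin h) (y : Stmt13.Vt h U color), i ≠ 0 → G1.Adj (cyc u i) y →
      ((i.val % 2 = 0 ∧ y = cyc u (i + 1)) ∨ (i.val % 2 = 1 ∧ y = cyc u (i - 1))) := by
    intro u i y hi hadj
    rw [hG1] at hadj
    obtain ⟨u'', i'', hpar, hcase⟩ := hadj
    rcases hcase with ⟨ha, hb⟩ | ⟨hb, ha⟩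
    · obtain ⟨he1, he2⟩ := hrep u u'' i i'' hi ha
      subst he1; subst he2
      exact Or.inl ⟨hpar, hb⟩
    · obtain ⟨he1, he2⟩ := hrep u u'' i (i'' + 1) hi ha
      subst he1
      have hv := haddval i'' i he2.symm hi
      have hsub : i - 1 = i'' := by rw [he2]; abel
      right
      refine ⟨by omega, ?_⟩
      rw [hb, hsub]
  have key2 : ∀ (u : U) (i : Fin h) (y : Stmt13.Vt h U color), i ≠ 0 → G2.Adj (cyc u i) y →
      ((i.val % 2 = 1 ∧ y = cyc u (i + 1)) ∨ (i.val % 2 = 0 ∧ y = cyc u (i - 1))) := by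
    intro u i y hi hadj
    rw [hG2] at hadj
    obtain ⟨u'', i'', hpar, hcase⟩ := hadj
    rcases hcase with ⟨ha, hb⟩ | ⟨hb, ha⟩
    · obtain ⟨he1, he2⟩ := hrep u u'' i i'' hi ha
      subst he1; subst he2
      exact Or.inl ⟨hpar, hb⟩
    · obtain ⟨he1, he2⟩ := hrep u u'' i (i'' + 1) hi ha
      subst he1
      have hv := haddval i'' i he2.symm hi
      have hsub : i - 1 = i'' := by rw [he2]; abel
      right
      refine ⟨by omega, ?_⟩
      rw [hb, hsub]
  constructor
  · -- forward direction
    rintro ⟨f, hfc, hfadj⟩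
    have hfinj : Function.Injective f := by
      intro a b hab
      rw [← hfc a, ← hfc b, hab]
    set e : Fin h × Fin h → Stmt13.Vt h U color := fun q => cyc (f q.1) q.2 with he_def
    have heinj : Function.Injective e := by
      rintro ⟨j, i⟩ ⟨j', i'⟩ hq
      simp only [e] at hq
      by_cases hi : i = 0
      · subst hi
        by_cases hi' : i' = 0
        · subst hi'
          rw [hstart0, hstart0] at hq
          have h2 := Sum.inr.inj hq
          rw [hfc, hfc] at h2
          rw [h2]
        · obtain ⟨h1, h2⟩ := hrep _ _ _ _ hi' hq.symm
          exact absurd h2 hi'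
      · obtain ⟨h1, h2⟩ := hrep _ _ _ _ hi hq
        rw [hfinj h1, h2]
    have hmemX : ∀ x, x ∈ Finset.image e Finset.univ ↔ ∃ q, e q = x := by
      intro x
      simp [Finset.mem_image]
    have hmemX' : ∀ q, e q ∈ Finset.image e Finset.univ := fun q =>
      Finset.mem_image_of_mem _ (Finset.mem_univ q)
    have mk12 : ∀ (G : SimpleGraph (Stmt13.Vt h U color)) (r : Fin h → Fin h),
        Function.Involutive r →
        (∀ (j i : Fin h), G.Adj (cyc (f j) i) (cyc (f j) (r i))) →
        ∃ M : (G.induce (↑(Finset.image e Finset.univ) :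
            Set (Stmt13.Vt h U color))).Subgraph, M.IsPerfectMatching := by
      intro G r hrinv hGadj
      have hrepx : ∀ v : (↑(Finset.image e Finset.univ) : Set (Stmt13.Vt h U color)),
          ∃ q, e q = v.1 := fun v => (hmemX v.1).1 (Finset.mem_coe.1 v.2)
      refine exists_pm' _
        (fun v => ⟨e ((hrepx v).choose.1, r (hrepx v).choose.2), hmemX' _⟩) ?_ ?_
      · intro v
        have hq1 : e (hrepx v).choose = v.1 := (hrepx v).choose_spec
        set q := (hrepx v).choose with hqdef
        set w : (↑(Finset.image e Finset.univ) : Set (Stmt13.Vt h U color)) :=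
          ⟨e (q.1, r q.2), hmemX' _⟩ with hwdef
        have hq2 : e (hrepx w).choose = e (q.1, r q.2) := (hrepx w).choose_spec
        have hq3 := heinj hq2
        apply Subtype.ext
        show e ((hrepx w).choose.1, r (hrepx w).choose.2) = v.1
        rw [hq3]
        show e (q.1, r (r q.2)) = v.1
        rw [hrinv q.2]
        exact hq1
      · intro v
        have hq1 : e (hrepx v).choose = v.1 := (hrepx v).choose_spec
        show G.Adj v.1 _
        have hA : G.Adj (e (hrepx v).choose) (e ((hrepx v).choose.1, r (hrepx v).choose.2)) :=
          hGadj _ _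
        rw [hq1] at hA
        exact hA
    refine ⟨Finset.image e Finset.univ, ?_, ?_, ?_, ?_⟩
    · rw [Finset.card_image_of_injective _ heinj, Finset.card_univ]
      simp only [Fintype.card_prod, Fintype.card_fin]
      exact le_of_eq (pow_two h)
    · -- G1 matching
      refine mk12 G1 (fun i => if i.val % 2 = 0 then i + 1 else i - 1) ?_ ?_
      · intro i
        simp only []
        by_cases hp : i.val % 2 = 0
        · rw [if_pos hp]
          have hv : (i + 1).val = i.val + 1 := by
            rw [hval_add, Nat.mod_eq_of_lt (by have := i.isLt; omega)]
          rw [if_neg (by rw [hv]; omega)]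
          abel
        · rw [if_neg hp]
          have hv : (i - 1).val = i.val - 1 := by
            rw [hval_sub, if_neg (by omega)]
          rw [if_pos (by rw [hv]; omega)]
          abel
      · intro j i
        by_cases hp : i.val % 2 = 0
        · rw [if_pos hp]
          exact (hG1 _ _).2 ⟨f j, i, hp, Or.inl ⟨rfl, rfl⟩⟩
        · rw [if_neg hp]
          refine (hG1 _ _).2 ⟨f j, i - 1, ?_, Or.inr ⟨rfl, ?_⟩⟩
          · rw [hval_sub, if_neg (by omega)]
            omega
          · rw [show i - 1 + 1 = i by abel]
    · -- G2 matching
      refine mk12 G2 (fun i => if i.val % 2 = 1 then i + 1 else i - 1) ?_ ?_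
      · intro i
        simp only []
        by_cases hp : i.val % 2 = 1
        · rw [if_pos hp]
          rw [if_neg (by rw [hval_add']; split <;> omega)]
          abel
        · rw [if_neg hp]
          rw [if_pos (by rw [hval_sub]; split <;> omega)]
          abel
      · intro j i
        by_cases hp : i.val % 2 = 1
        · rw [if_pos hp]
          exact (hG2 _ _).2 ⟨f j, i, hp, Or.inl ⟨rfl, rfl⟩⟩
        · rw [if_neg hp]
          refine (hG2 _ _).2 ⟨f j, i - 1, ?_, Or.inr ⟨rfl, ?_⟩⟩
          · rw [hval_sub]
            split <;> omega
          · rw [show i - 1 + 1 = i by abel]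
    · -- G3 matching
      obtain ⟨ρ, hρinv, hρspec⟩ : ∃ ρ : Fin h → Fin h, Function.Involutive ρ ∧
          ∀ j : Fin h, (ρ j).val = j.val + h / 2 ∨ j.val = (ρ j).val + h / 2 := by
        refine ⟨fun j => if hc : j.val < h / 2 then ⟨j.val + h / 2, by omega⟩
          else ⟨j.val - h / 2, by have := j.isLt; omega⟩, ?_, ?_⟩
        · intro j
          by_cases hc : j.val < h / 2
          · have hc2 : ¬ ((⟨j.val + h / 2, by omega⟩ : Fin h).val < h / 2) := by
              show ¬ (j.val + h / 2 < h / 2); omega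
            simp only [dif_pos hc, dif_neg hc2]
            exact Fin.ext (show j.val + h / 2 - h / 2 = j.val by omega)
          · have hc2 : (⟨j.val - h / 2, by have := j.isLt; omega⟩ : Fin h).val < h / 2 := by
              show j.val - h / 2 < h / 2
              have := j.isLt; omega
            simp only [dif_neg hc, dif_pos hc2]
            exact Fin.ext (show j.val - h / 2 + h / 2 = j.val by omega)
        · intro j
          by_cases hc : j.val < h / 2
          · refine Or.inl ?_
            simp only [dif_pos hc]
          · refine Or.inr ?_
            simp only [dif_neg hc]
            have := j.isLt
            omega
      set m3 : Stmt13.Vt h U color → Stmt13.Vt h U color :=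
        Sum.elim
          (fun p => (Sum.inl ⟨(f p.1.2, color p.1.1), by rw [hfc]; exact Ne.symm p.2⟩ : Stmt13.Vt h U color))
          (fun j => Sum.inr (ρ j)) with hm3def
      have hm3X : ∀ x, m3 x ∈ Finset.image e Finset.univ := by
        intro x
        cases x with
        | inl p =>
          show Sum.inl _ ∈ Finset.image e Finset.univ
          obtain ⟨i0, hi0⟩ := hinl_mem
            ⟨(f p.1.2, color p.1.1), by rw [hfc]; exact Ne.symm p.2⟩
          rw [← hi0]
          exact hmemX' (p.1.2, i0)
        | inr j =>
          show Sum.inr (ρ j) ∈ Finset.image e Finset.univ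
          have he2 : e (ρ j, 0) = Sum.inr (ρ j) := by
            show cyc (f (ρ j)) 0 = _
            rw [hstart0, hfc]
          rw [← he2]
          exact hmemX' _
      have hfix : ∀ p : {p : U × Fin h // p.2 ≠ color p.1},
          Sum.inl p ∈ Finset.image e Finset.univ → f (color p.1.1) = p.1.1 := by
        intro p hp
        obtain ⟨q, hq⟩ := (hmemX _).1 hp
        have hq2ne : q.2 ≠ 0 := by
          intro h0
          rw [show q = (q.1, q.2) from rfl, h0] at hq
          have : cyc (f q.1) 0 = Sum.inl p := hq
          rw [hstart0] at this
          exact nomatch this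
        have hpq : p.1.1 = f q.1 := hinl_range p (f q.1) ⟨q.2, hq⟩
        rw [hpq, hfc]
      have hm3inv : ∀ x, x ∈ Finset.image e Finset.univ → m3 (m3 x) = x := by
        intro x hx
        cases x with
        | inl p =>
          rw [hm3def]
          show Sum.inl _ = Sum.inl p
          have h1 : f (color p.1.1) = p.1.1 := hfix p hx
          have h2 : color (f p.1.2) = p.1.2 := hfc _
          exact congrArg Sum.inl (Subtype.ext
            (show (f (color p.1.1), color (f p.1.2)) = p.1 by rw [h1, h2]))
        | inr j =>
          rw [hm3def]
          show Sum.inr (ρ (ρ j)) = Sum.inr j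
          rw [hρinv j]
      have hm3adj : ∀ x, x ∈ Finset.image e Finset.univ → G3.Adj x (m3 x) := by
        intro x hx
        cases x with
        | inl p =>
          refine (hG3 _ _).2 ?_
          left
          refine ⟨p, ⟨(f p.1.2, color p.1.1), by rw [hfc]; exact Ne.symm p.2⟩,
            rfl, rfl, ?_, (hfc _).symm, rfl⟩
          have h1 := hfadj (color p.1.1) p.1.2 (Ne.symm p.2)
          rw [hfix p hx] at h1
          exact h1
        | inr j =>
          refine (hG3 _ _).2 ?_
          right
          exact ⟨j, ρ j, rfl, rfl, hρspec j⟩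
      refine exists_pm' _ (fun v => ⟨m3 v.1, Finset.mem_coe.2 (hm3X v.1)⟩) ?_ ?_
      · intro v
        exact Subtype.ext (hm3inv v.1 (Finset.mem_coe.1 v.2))
      · intro v
        show G3.Adj v.1 (m3 v.1)
        exact hm3adj v.1 (Finset.mem_coe.1 v.2)
  · -- backward direction
    rintro ⟨X, hXcard, ⟨M1, hM1⟩, ⟨M2, hM2⟩, ⟨M3, hM3⟩⟩
    have partner : ∀ (G : SimpleGraph (Stmt13.Vt h U color))
        (M : (G.induce (↑X : Set (Stmt13.Vt h U color))).Subgraph), M.IsPerfectMatching →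
        ∀ x, x ∈ X → ∃ y, y ∈ X ∧ G.Adj x y := by
      intro G M hM x hx
      obtain ⟨y, hy, -⟩ := hM.1 (hM.2 ⟨x, Finset.mem_coe.2 hx⟩)
      exact ⟨y.1, Finset.mem_coe.1 y.2, M.adj_sub hy⟩
    have step_up : ∀ (u : U) (i : Fin h), i ≠ 0 → cyc u i ∈ X → cyc u (i + 1) ∈ X := by
      intro u i hi hx
      by_cases hp : i.val % 2 = 0
      · obtain ⟨y, hyX, hyadj⟩ := partner G1 M1 hM1 _ hx
        rcases key1 u i y hi hyadj with ⟨-, hy⟩ | ⟨hpar, -⟩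
        · rwa [← hy]
        · omega
      · obtain ⟨y, hyX, hyadj⟩ := partner G2 M2 hM2 _ hx
        rcases key2 u i y hi hyadj with ⟨-, hy⟩ | ⟨hpar, -⟩
        · rwa [← hy]
        · omega
    have step_down : ∀ (u : U) (i : Fin h), i ≠ 0 → cyc u i ∈ X → cyc u (i - 1) ∈ X := by
      intro u i hi hx
      by_cases hp : i.val % 2 = 0
      · obtain ⟨y, hyX, hyadj⟩ := partner G2 M2 hM2 _ hx
        rcases key2 u i y hi hyadj with ⟨hpar, -⟩ | ⟨-, hy⟩
        · omega
        · rwa [← hy]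
      · obtain ⟨y, hyX, hyadj⟩ := partner G1 M1 hM1 _ hx
        rcases key1 u i y hi hyadj with ⟨hpar, -⟩ | ⟨-, hy⟩
        · omega
        · rwa [← hy]
    have chain_down : ∀ (u : U) (i : Fin h), i ≠ 0 → cyc u i ∈ X →
        ∀ m : ℕ, m ≤ i.val → cyc u ⟨i.val - m, by have := i.isLt; omega⟩ ∈ X := by
      intro u i hi hx m
      induction m with
      | zero =>
        intro _
        have he2 : (⟨i.val - 0, by have := i.isLt; omega⟩ : Fin h) = i := Fin.ext (by simp)
        rwa [he2]
      | succ n ih =>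
        intro hm
        have prev := ih (by omega)
        have hne : (⟨i.val - n, by have := i.isLt; omega⟩ : Fin h) ≠ 0 := by
          intro hc
          have h2 := congrArg Fin.val hc
          rw [hzval] at h2
          simp only [] at h2
          omega
        have hstep := step_down u _ hne prev
        have he2 : (⟨i.val - n, by have := i.isLt; omega⟩ : Fin h) - 1 =
            ⟨i.val - (n + 1), by have := i.isLt; omega⟩ := by
          apply Fin.ext
          rw [hval_sub]
          rw [if_neg (show ¬ ((⟨i.val - n, by have := i.isLt; omega⟩ : Fin h).val = 0) by
            show ¬ (i.val - n = 0); omega)]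
          show i.val - n - 1 = i.val - (n + 1)
          omega
        rwa [he2] at hstep
    have chain_up : ∀ (u : U) (i : Fin h), i ≠ 0 → cyc u i ∈ X →
        ∀ (m : ℕ) (hm : i.val + m < h), cyc u ⟨i.val + m, hm⟩ ∈ X := by
      intro u i hi hx m
      induction m with
      | zero =>
        intro hm
        have he2 : (⟨i.val + 0, hm⟩ : Fin h) = i := Fin.ext (by simp)
        rwa [he2]
      | succ n ih =>
        intro hm
        have prev := ih (by omega)
        have hival := hne_zero_val i hi
        have hne : (⟨i.val + n, by omega⟩ : Fin h) ≠ 0 := by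
          intro hc
          have h2 := congrArg Fin.val hc
          rw [hzval] at h2
          simp only [] at h2
          omega
        have hstep := step_up u _ hne prev
        have he2 : (⟨i.val + n, by omega⟩ : Fin h) + 1 = ⟨i.val + (n + 1), hm⟩ := by
          apply Fin.ext
          rw [hval_add]
          show (i.val + n + 1) % h = i.val + (n + 1)
          rw [Nat.mod_eq_of_lt (by omega)]
          omega
        rwa [he2] at hstep
    have hclose : ∀ (u : U) (i0 : Fin h), i0 ≠ 0 → cyc u i0 ∈ X →
        ∀ i : Fin h, cyc u i ∈ X := by
      intro u i0 h0 hx i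
      by_cases hle : i.val ≤ i0.val
      · have hc := chain_down u i0 h0 hx (i0.val - i.val) (by omega)
        have he2 : (⟨i0.val - (i0.val - i.val), by have := i0.isLt; omega⟩ : Fin h) = i :=
          Fin.ext (show i0.val - (i0.val - i.val) = i.val by omega)
        rwa [he2] at hc
      · have hc := chain_up u i0 h0 hx (i.val - i0.val) (by have := i.isLt; omega)
        have he2 : (⟨i0.val + (i.val - i0.val), by have := i.isLt; omega⟩ : Fin h) = i :=
          Fin.ext (show i0.val + (i.val - i0.val) = i.val by omega)
        rwa [he2] at hc
    set S : Finset U := Finset.univ.filter (fun u => ∀ i : Fin h, cyc u i ∈ X) with hSdef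
    have hS : ∀ u, u ∈ S ↔ ∀ i : Fin h, cyc u i ∈ X := by
      intro u
      rw [hSdef, Finset.mem_filter]
      simp
    have hmemS : ∀ p : {p : U × Fin h // p.2 ≠ color p.1}, Sum.inl p ∈ X → p.1.1 ∈ S := by
      intro p hp
      rw [hS]
      obtain ⟨i0, hi0⟩ := hinl_mem p
      have hi0ne : i0 ≠ 0 := by
        intro hc
        rw [hc, hstart0] at hi0
        exact nomatch hi0
      exact hclose p.1.1 i0 hi0ne (by rw [hi0]; exact hp)
    have hcinj : ∀ u ∈ S, ∀ u' ∈ S, color u = color u' → u = u' := by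
      intro u hu u' hu' hcc
      have h1X : cyc u 1 ∈ X := (hS u).1 hu 1
      have h1X' : cyc u' 1 ∈ X := (hS u').1 hu' 1
      have h0X : cyc u 0 ∈ X := (hS u).1 hu 0
      obtain ⟨y, hy, -⟩ := hM1.1 (hM1.2 ⟨cyc u 1, Finset.mem_coe.2 h1X⟩)
      have hadj : G1.Adj (cyc u 1) y.1 := M1.adj_sub hy
      have hy0 : y.1 = cyc u 0 := by
        rcases key1 u 1 y.1 hone_ne hadj with ⟨hpar, -⟩ | ⟨-, hyy⟩
        · rw [hone] at hpar; omega
        · rw [hyy, sub_self]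
      obtain ⟨y', hy', -⟩ := hM1.1 (hM1.2 ⟨cyc u' 1, Finset.mem_coe.2 h1X'⟩)
      have hadj' : G1.Adj (cyc u' 1) y'.1 := M1.adj_sub hy'
      have hy0' : y'.1 = cyc u' 0 := by
        rcases key1 u' 1 y'.1 hone_ne hadj' with ⟨hpar, -⟩ | ⟨-, hyy⟩
        · rw [hone] at hpar; omega
        · rw [hyy, sub_self]
      have hww : cyc u' 0 = cyc u 0 := by rw [hstart0, hstart0, hcc]
      have hyeq : y = ⟨cyc u 0, Finset.mem_coe.2 h0X⟩ := Subtype.ext hy0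
      have hy'eq : y' = ⟨cyc u 0, Finset.mem_coe.2 h0X⟩ := Subtype.ext (by rw [hy0', hww])
      rw [hyeq] at hy
      rw [hy'eq] at hy'
      obtain ⟨z, hz, hzu⟩ := hM1.1 (hM1.2 ⟨cyc u 0, Finset.mem_coe.2 h0X⟩)
      have e1 := hzu _ (M1.adj_symm hy)
      have e2 := hzu _ (M1.adj_symm hy')
      have hcyc : cyc u 1 = cyc u' 1 := congrArg Subtype.val (e1.trans e2.symm)
      exact (hrep u u' 1 1 hone_ne hcyc).1
    -- counting
    have hsub1 : X.filter (fun x => ∃ p, x = Sum.inl p) ⊆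
        S.biUnion (fun u => (Finset.univ.erase (0 : Fin h)).image (cyc u)) := by
      intro x hx
      replace hx := Finset.mem_filter.1 hx
      obtain ⟨hxX, p, rfl⟩ := hx
      obtain ⟨i0, hi0⟩ := hinl_mem p
      have hi0ne : i0 ≠ 0 := by
        intro hc
        rw [hc, hstart0] at hi0
        exact nomatch hi0
      rw [Finset.mem_biUnion]
      exact ⟨p.1.1, hmemS p hxX,
        Finset.mem_image.2 ⟨i0, Finset.mem_erase.2 ⟨hi0ne, Finset.mem_univ _⟩, hi0⟩⟩
    have hcard1 : (X.filter (fun x => ∃ p, x = Sum.inl p)).card ≤ S.card * (h - 1) := by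
      refine (Finset.card_le_card hsub1).trans ?_
      refine Finset.card_biUnion_le.trans ?_
      refine le_trans (Finset.sum_le_sum (g := fun _ => h - 1) (fun u _ => ?_)) (le_of_eq ?_)
      · exact Finset.card_image_le.trans (le_of_eq (by
          rw [Finset.card_erase_of_mem (Finset.mem_univ _), Finset.card_univ,
            Fintype.card_fin]))
      · rw [Finset.sum_const, smul_eq_mul]
    have hcard2 : (X.filter (fun x => ¬ ∃ p, x = Sum.inl p)).card ≤ h := by
      have hsub2 : X.filter (fun x => ¬ ∃ p, x = Sum.inl p) ⊆
          Finset.univ.image (Sum.inr : Fin h → Stmt13.Vt h U color) := by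
        intro x hx
        replace hx := Finset.mem_filter.1 hx
        obtain ⟨-, hnp⟩ := hx
        cases x with
        | inl p => exact absurd ⟨p, rfl⟩ hnp
        | inr j => exact Finset.mem_image.2 ⟨j, Finset.mem_univ _, rfl⟩
      refine (Finset.card_le_card hsub2).trans (Finset.card_image_le.trans ?_)
      rw [Finset.card_univ, Fintype.card_fin]
    have hXsplit : X.card ≤ (X.filter (fun x => ∃ p, x = Sum.inl p)).card +
        (X.filter (fun x => ¬ ∃ p, x = Sum.inl p)).card := by
      refine le_trans (Finset.card_le_card ?_) (Finset.card_union_le _ _)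
      intro x hx
      refine ((Finset.mem_union (α := Stmt13.Vt h U color)).trans (or_congr (Finset.mem_filter (α := {p : U × Fin h // p.2 ≠ color p.1} ⊕ Fin h))
        (Finset.mem_filter (α := {p : U × Fin h // p.2 ≠ color p.1} ⊕ Fin h)))).2 ?_
      by_cases hc : ∃ p, x = Sum.inl p
      · exact Or.inl ⟨hx, hc⟩
      · exact Or.inr ⟨hx, hc⟩
    have hXle : h ^ 2 ≤ S.card * (h - 1) + h := by omega
    have hSinj : Set.InjOn color (↑S : Set U) :=
      fun a ha b hb hab => hcinj a (Finset.mem_coe.1 ha) b (Finset.mem_coe.1 hb) hab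
    have hSle : S.card ≤ h := by
      have hc := Finset.card_le_card_of_injOn color
        (fun a _ => Finset.mem_univ (color a)) hSinj
      rwa [Finset.card_univ, Fintype.card_fin] at hc
    have hScard : S.card = h := by
      by_contra hne
      have hlt : S.card ≤ h - 1 := by omega
      have h2 : S.card * (h - 1) ≤ (h - 1) * (h - 1) := Nat.mul_le_mul_right _ hlt
      have h4 : h * h ≤ (h - 1) * (h - 1) + h := by
        have := hXle
        rw [pow_two] at this
        omega
      have h6 : ((h - 1) + 1) * ((h - 1) + 1) ≤ (h - 1) * (h - 1) + ((h - 1) + 1) := by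
        rw [show (h - 1) + 1 = h by omega]
        exact h4
      have hx : ((h - 1) + 1) * ((h - 1) + 1) = (h - 1) * (h - 1) + 2 * (h - 1) + 1 := by
        ring
      have h8 : 3 ≤ h - 1 := by omega
      linarith [h6, hx, h8]
    have himg : S.image color = Finset.univ := by
      apply Finset.eq_univ_of_card
      rw [Finset.card_image_of_injOn hSinj, hScard, Fintype.card_fin]
    have hsurj : ∀ j : Fin h, ∃ u, u ∈ S ∧ color u = j := by
      intro j
      have hj : j ∈ S.image color := by rw [himg]; exact Finset.mem_univ j
      obtain ⟨u, hu, hc⟩ := Finset.mem_image.1 hj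
      exact ⟨u, hu, hc⟩
    refine ⟨fun j => (hsurj j).choose, fun j => (hsurj j).choose_spec.2, ?_⟩
    intro j j' hjj'
    obtain ⟨huS, hcu⟩ := (hsurj j).choose_spec
    obtain ⟨huS', hcu'⟩ := (hsurj j').choose_spec
    have hne2 : j' ≠ color ((hsurj j).choose) := by
      rw [hcu]
      exact Ne.symm hjj'
    have hpX : Sum.inl (⟨((hsurj j).choose, j'), hne2⟩ :
        {p : U × Fin h // p.2 ≠ color p.1}) ∈ X := by
      obtain ⟨i0, hi0⟩ := hinl_mem ⟨((hsurj j).choose, j'), hne2⟩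
      rw [← hi0]
      exact (hS _).1 huS i0
    obtain ⟨y, hyX, hyadj⟩ := partner G3 M3 hM3 _ hpX
    replace hyadj := (hG3 _ _).1 hyadj
    rcases hyadj with ⟨p₁, q, hp₁, hq, hadjH, hpc, hqc⟩ | ⟨j₁, j₂, habs, -⟩
    · obtain rfl : (⟨((hsurj j).choose, j'), hne2⟩ :
          {p : U × Fin h // p.2 ≠ color p.1}) = p₁ := Sum.inl.inj hp₁
      have hqS : q.1.1 ∈ S := by
        apply hmemS
        rw [← hq]
        exact hyX
      have hqu' : q.1.1 = (hsurj j').choose := by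
        apply hcinj q.1.1 hqS _ huS'
        rw [hcu']
        exact hpc.symm
      rw [hqu'] at hadjH
      exact hadjH
    · exact nomatch habs
end
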